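/- Welch bound: Let M and N be positive integers with N ≥ M and N ≥ 2, and let φ_1, …, φ_N be unit vectors in ℂ^M. Then the worst-case coherence satisfies μ(Φ) := max_{i≠j} |⟨φ_i, φ_j⟩| ≥ √((N−M)/(M(N−1))). -/

import Mathlib

open scoped InnerProductSpace

open Matrix Finset in
private lemma welch_trace_aux {n : Type*} [Fintype n] (B : Matrix n n ℂ) :
    (B * Bᴴ).trace = ∑ i, ∑ j, (Complex.normSq (B i j) : ℂ) := by
  simp [Matrix.trace, Matrix.mul_apply, Matrix.conjTranspose_apply, Matrix.diag,
    Complex.mul_conj]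

open Matrix Finset in
private lemma welch_key (M N : ℕ) (φ : Fin N → EuclideanSpace ℂ (Fin M))
    (hunit : ∀ i, ‖φ i‖ = 1) :
    (N : ℝ)^2 ≤ M * ∑ i, ∑ j, ‖⟪φ i, φ j⟫_ℂ‖^2 := by
  set A : Matrix (Fin N) (Fin M) ℂ := Matrix.of (fun i k => φ i k) with hA
  set G : Matrix (Fin N) (Fin N) ℂ := A * Aᴴ with hG
  set H : Matrix (Fin M) (Fin M) ℂ := Aᴴ * A with hH
  have hGij : ∀ i j, G i j = (starRingEnd ℂ) ⟪φ i, φ j⟫_ℂ := by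
    intro i j
    simp [hG, Matrix.mul_apply, Matrix.conjTranspose_apply, PiLp.inner_apply, map_sum,
      mul_comm, hA]
  have hGH : Gᴴ = G := by
    rw [hG, Matrix.conjTranspose_mul, Matrix.conjTranspose_conjTranspose]
  have hHH : Hᴴ = H := by
    rw [hH, Matrix.conjTranspose_mul, Matrix.conjTranspose_conjTranspose]
  have htr : (G * Gᴴ).trace = (H * Hᴴ).trace := by
    rw [hGH, hHH, hG, hH]
    rw [Matrix.mul_assoc, Matrix.trace_mul_comm]
    simp only [Matrix.mul_assoc]
  have hsum : ∑ i, ∑ j, Complex.normSq (G i j) = ∑ k, ∑ l, Complex.normSq (H k l) := by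
    have := htr
    rw [welch_trace_aux, welch_trace_aux] at this
    exact_mod_cast this
  have hSG : ∑ i, ∑ j, ‖⟪φ i, φ j⟫_ℂ‖^2 = ∑ i, ∑ j, Complex.normSq (G i j) := by
    refine Finset.sum_congr rfl fun i _ => Finset.sum_congr rfl fun j _ => ?_
    rw [hGij, Complex.normSq_conj, Complex.normSq_eq_norm_sq]
  have htrH : ∑ k, (H k k).re = (N : ℝ) := by
    have h1 : H.trace = (N : ℂ) := by
      rw [hH, Matrix.trace_mul_comm, ← hG, Matrix.trace]
      have : ∀ i, G i i = 1 := by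
        intro i
        rw [hGij, inner_self_eq_norm_sq_to_K, hunit]
        simp
      simp [Matrix.diag, this]
    have := congrArg Complex.re h1
    rw [Matrix.trace] at this
    simpa [Matrix.diag, Complex.re_sum] using this
  have cs : (N : ℝ)^2 ≤ M * ∑ k, (H k k).re ^ 2 := by
    calc (N : ℝ)^2 = (∑ k, (H k k).re)^2 := by rw [htrH]
      _ ≤ M * ∑ k, (H k k).re ^ 2 := by
          have := sq_sum_le_card_mul_sum_sq (s := (Finset.univ : Finset (Fin M)))
            (f := fun k => (H k k).re)
          simpa using this
  calc (N : ℝ)^2 ≤ M * ∑ k, (H k k).re ^ 2 := cs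
    _ ≤ M * ∑ k, ∑ l, Complex.normSq (H k l) := by
        refine mul_le_mul_of_nonneg_left (Finset.sum_le_sum fun k _ => ?_) (by positivity)
        calc (H k k).re ^ 2 ≤ Complex.normSq (H k k) := by
              rw [Complex.normSq_apply]; nlinarith [sq_nonneg (H k k).im]
          _ ≤ ∑ l, Complex.normSq (H k l) :=
              Finset.single_le_sum (fun l _ => Complex.normSq_nonneg _) (Finset.mem_univ k)
    _ = M * ∑ i, ∑ j, ‖⟪φ i, φ j⟫_ℂ‖^2 := by rw [hSG, hsum]

/-- **Welch bound.** For unit vectors `φ 1, …, φ N` in `ℂ^M` (with `M ≤ N`, `2 ≤ N`),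
the worst-case coherence `max_{i ≠ j} |⟨φ i, φ j⟩|` is at least
`√((N − M) / (M (N − 1)))`. -/
theorem welch_bound (M N : ℕ) (hM : 1 ≤ M) (hMN : M ≤ N) (hN : 2 ≤ N)
    (φ : Fin N → EuclideanSpace ℂ (Fin M)) (hunit : ∀ i, ‖φ i‖ = 1) :
    Real.sqrt (((N : ℝ) - M) / (M * ((N : ℝ) - 1))) ≤
      ⨆ p : {p : Fin N × Fin N // p.1 ≠ p.2}, ‖⟪φ p.val.1, φ p.val.2⟫_ℂ‖ := by
  set B : ℝ := ((N : ℝ) - M) / (M * ((N : ℝ) - 1)) with hB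
  have hM' : (1:ℝ) ≤ M := by exact_mod_cast hM
  have hN' : (2:ℝ) ≤ N := by exact_mod_cast hN
  have hMN' : (M:ℝ) ≤ N := by exact_mod_cast hMN
  have hMpos : (0:ℝ) < M := by linarith
  have key := welch_key M N φ hunit
  have hdiag : ∀ i : Fin N, ‖⟪φ i, φ i⟫_ℂ‖ = 1 := by
    intro i; rw [inner_self_eq_norm_sq_to_K, hunit]; simp
  have hsplit : ∑ p ∈ (Finset.univ : Finset (Fin N)).offDiag, ‖⟪φ p.1, φ p.2⟫_ℂ‖^2
      = (∑ i, ∑ j, ‖⟪φ i, φ j⟫_ℂ‖^2) - N := by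
    have h1 : ∑ i, ∑ j, ‖⟪φ i, φ j⟫_ℂ‖^2
        = ∑ p ∈ Finset.univ ×ˢ Finset.univ, ‖⟪φ p.1, φ p.2⟫_ℂ‖^2 := by
      rw [Finset.sum_product]
    rw [h1, ← Finset.diag_union_offDiag, Finset.sum_union (Finset.disjoint_diag_offDiag _),
      Finset.sum_diag]
    have h2 : ∑ x : Fin N, ‖⟪φ x, φ x⟫_ℂ‖ ^ 2 = (N:ℝ) := by
      simp only [hdiag, one_pow, Finset.sum_const, Finset.card_univ, Fintype.card_fin,
        nsmul_eq_mul, mul_one]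
    rw [h2]
    ring
  have hoff : (N:ℝ) * ((N:ℝ) - M) / M
      ≤ ∑ p ∈ (Finset.univ : Finset (Fin N)).offDiag, ‖⟪φ p.1, φ p.2⟫_ℂ‖^2 := by
    rw [hsplit, div_le_iff₀ hMpos]
    nlinarith [key]
  have hcard : (((Finset.univ : Finset (Fin N)).offDiag.card : ℝ)) = N * ((N:ℝ) - 1) := by
    rw [Finset.offDiag_card, Finset.card_univ, Fintype.card_fin]
    have h1 : N ≤ N * N := Nat.le_mul_of_pos_left N (by omega)
    push_cast [Nat.cast_sub h1]
    ring
  have hex : ∃ p ∈ (Finset.univ : Finset (Fin N)).offDiag, B ≤ ‖⟪φ p.1, φ p.2⟫_ℂ‖^2 := by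
    by_contra h
    push_neg at h
    have hne : ((Finset.univ : Finset (Fin N)).offDiag).Nonempty := by
      refine ⟨(⟨0, by omega⟩, ⟨1, by omega⟩), ?_⟩
      simp [Finset.mem_offDiag, Fin.ext_iff]
    have hlt := Finset.sum_lt_sum_of_nonempty hne h
    rw [Finset.sum_const, nsmul_eq_mul, hcard] at hlt
    have hMne : (M:ℝ) ≠ 0 := by linarith
    have hNne : (N:ℝ) - 1 ≠ 0 := by linarith
    have heq : (N:ℝ) * ((N:ℝ)-1) * B = (N:ℝ) * ((N:ℝ) - M) / M := by
      rw [hB]; field_simp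
    linarith [hoff, hlt]
  obtain ⟨p, hp, hpB⟩ := hex
  have hpne : p.1 ≠ p.2 := (Finset.mem_offDiag.mp hp).2.2
  have h1 : Real.sqrt B ≤ ‖⟪φ p.1, φ p.2⟫_ℂ‖ := by
    calc Real.sqrt B ≤ Real.sqrt (‖⟪φ p.1, φ p.2⟫_ℂ‖^2) := Real.sqrt_le_sqrt hpB
      _ = ‖⟪φ p.1, φ p.2⟫_ℂ‖ := Real.sqrt_sq (norm_nonneg _)
  refine h1.trans ?_
  exact le_ciSup (f := fun q : {p : Fin N × Fin N // p.1 ≠ p.2} => ‖⟪φ q.val.1, φ q.val.2⟫_ℂ‖)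
    (Set.Finite.bddAbove (Set.finite_range _)) ⟨p, hpne⟩
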